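/- Let 0 < a < b and let p be a real number with p ∉ {−1, 0}. Then |A(a,b)ᵖ − L_p(a,b)ᵖ| ≤ (1/4)·(1−p)·aᵖ·(b−a)/A(a,b) if p < 0 and p ≠ −1, and |A(a,b)ᵖ − L_p(a,b)ᵖ| ≤ (1/4)·|1−p|·bᵖ·(b−a)/A(a,b) if p ∈ (0,1) ∪ (1,∞). -/

import Mathlib

open Real Set MeasureTheory intervalIntegral

private lemma gm_am {x w : ℝ} (hx : 0 ≤ x) (hw0 : 0 ≤ w) (hw1 : w ≤ 1) :
    x ^ w ≤ w * x + (1 - w) := by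
  have h := Real.geom_mean_le_arith_mean2_weighted hw0 (by linarith : (0:ℝ) ≤ 1 - w) hx
    zero_le_one (by ring)
  simpa using h

private lemma chord_cvx {p : ℝ} (hp : p < 0 ∨ 1 ≤ p) {x y w₁ w₂ : ℝ} (hx : 0 < x) (hy : 0 < y)
    (hw₁ : 0 ≤ w₁) (hw₂ : 0 ≤ w₂) (hw : w₁ + w₂ = 1) :
    (w₁ * x + w₂ * y) ^ p ≤ w₁ * x ^ p + w₂ * y ^ p := by
  rcases hp with hp | hp
  · have hgm : x ^ w₁ * y ^ w₂ ≤ w₁ * x + w₂ * y :=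
      Real.geom_mean_le_arith_mean2_weighted hw₁ hw₂ hx.le hy.le hw
    have hgmpos : (0:ℝ) < x ^ w₁ * y ^ w₂ := by positivity
    have h1 : (w₁ * x + w₂ * y) ^ p ≤ (x ^ w₁ * y ^ w₂) ^ p :=
      Real.rpow_le_rpow_of_nonpos hgmpos hgm hp.le
    have h2 : (x ^ w₁ * y ^ w₂) ^ p = (x ^ p) ^ w₁ * (y ^ p) ^ w₂ := by
      rw [Real.mul_rpow (by positivity) (by positivity), ← Real.rpow_mul hx.le,
        ← Real.rpow_mul hy.le, mul_comm w₁ p, mul_comm w₂ p, Real.rpow_mul hx.le,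
        Real.rpow_mul hy.le]
    have h3 : (x ^ p) ^ w₁ * (y ^ p) ^ w₂ ≤ w₁ * x ^ p + w₂ * y ^ p :=
      Real.geom_mean_le_arith_mean2_weighted hw₁ hw₂ (Real.rpow_pos_of_pos hx p).le
        (Real.rpow_pos_of_pos hy p).le hw
    calc (w₁ * x + w₂ * y) ^ p ≤ (x ^ w₁ * y ^ w₂) ^ p := h1
      _ = (x ^ p) ^ w₁ * (y ^ p) ^ w₂ := h2
      _ ≤ w₁ * x ^ p + w₂ * y ^ p := h3
  · have h := (convexOn_rpow hp).2 (mem_Ici.2 hx.le) (mem_Ici.2 hy.le) hw₁ hw₂ hw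
    simpa [smul_eq_mul] using h

private lemma chord_ccv {p : ℝ} (hp0 : 0 ≤ p) (hp1 : p ≤ 1) {x y w₁ w₂ : ℝ}
    (hx : 0 ≤ x) (hy : 0 ≤ y) (hw₁ : 0 ≤ w₁) (hw₂ : 0 ≤ w₂) (hw : w₁ + w₂ = 1) :
    w₁ * x ^ p + w₂ * y ^ p ≤ (w₁ * x + w₂ * y) ^ p := by
  have h := (Real.concaveOn_rpow hp0 hp1).2 (mem_Ici.2 hx) (mem_Ici.2 hy) hw₁ hw₂ hw
  simpa [smul_eq_mul] using h

private lemma integrable_rpow' {a b p : ℝ} (ha : 0 < a) (hab : a ≤ b) :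
    IntervalIntegrable (fun x : ℝ => x ^ p) volume a b := by
  apply ContinuousOn.intervalIntegrable
  apply ContinuousOn.rpow_const continuousOn_id
  intro x hx
  rw [Set.uIcc_of_le hab] at hx
  exact Or.inl (lt_of_lt_of_le ha hx.1).ne'

private lemma integrable_rpow_refl {a b p : ℝ} (ha : 0 < a) (hab : a ≤ b) :
    IntervalIntegrable (fun x : ℝ => (a + b - x) ^ p) volume a b := by
  apply ContinuousOn.intervalIntegrable
  apply ContinuousOn.rpow_const (continuousOn_const.sub continuousOn_id)
  intro x hx
  rw [Set.uIcc_of_le hab] at hx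
  have : 0 < a + b - x := by have := hx.2; linarith
  exact Or.inl this.ne'

private lemma integral_refl_eq {a b p : ℝ} :
    (∫ x in a..b, (a + b - x) ^ p) = ∫ x in a..b, x ^ p := by
  have h := intervalIntegral.integral_comp_sub_left (a := a) (b := b)
    (fun x : ℝ => x ^ p) (a + b)
  simpa [show a + b - b = a by ring, show a + b - a = b by ring] using h

private lemma mid_le_integral {a b p : ℝ} (ha : 0 < a) (hab : a < b)
    (hmid : ∀ x y : ℝ, 0 < x → 0 < y → ((x + y) / 2) ^ p ≤ (x ^ p + y ^ p) / 2) :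
    (b - a) * ((a + b) / 2) ^ p ≤ ∫ x in a..b, x ^ p := by
  have hint1 := integrable_rpow' (p := p) ha hab.le
  have hint2 := integrable_rpow_refl (p := p) ha hab.le
  have key : (∫ _x in a..b, ((a + b) / 2) ^ p) ≤
      ∫ x in a..b, (x ^ p + (a + b - x) ^ p) / 2 := by
    apply intervalIntegral.integral_mono_on hab.le intervalIntegrable_const
      (((hint1.add hint2).div_const 2))
    intro x hx
    have hx0 : 0 < x := lt_of_lt_of_le ha hx.1
    have hy0 : 0 < a + b - x := by have := hx.2; linarith
    have h := hmid x (a + b - x) hx0 hy0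
    have hxy : (x + (a + b - x)) / 2 = (a + b) / 2 := by ring
    rw [hxy] at h
    exact h
  have h2 : (∫ x in a..b, (x ^ p + (a + b - x) ^ p) / 2)
      = ∫ x in a..b, x ^ p := by
    rw [intervalIntegral.integral_div, intervalIntegral.integral_add hint1 hint2,
      integral_refl_eq]
    ring
  have h3 : (∫ _x in a..b, ((a + b) / 2) ^ p) = (b - a) * ((a + b) / 2) ^ p := by
    simp [intervalIntegral.integral_const, smul_eq_mul]
  linarith [key, h2.symm ▸ key]

private lemma integral_le_mid {a b p : ℝ} (ha : 0 < a) (hab : a < b)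
    (hmid : ∀ x y : ℝ, 0 < x → 0 < y → (x ^ p + y ^ p) / 2 ≤ ((x + y) / 2) ^ p) :
    (∫ x in a..b, x ^ p) ≤ (b - a) * ((a + b) / 2) ^ p := by
  have hint1 := integrable_rpow' (p := p) ha hab.le
  have hint2 := integrable_rpow_refl (p := p) ha hab.le
  have key : (∫ x in a..b, (x ^ p + (a + b - x) ^ p) / 2) ≤
      ∫ _x in a..b, ((a + b) / 2) ^ p := by
    apply intervalIntegral.integral_mono_on hab.le ((hint1.add hint2).div_const 2)
      intervalIntegrable_const
    intro x hx
    have hx0 : 0 < x := lt_of_lt_of_le ha hx.1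
    have hy0 : 0 < a + b - x := by have := hx.2; linarith
    have h := hmid x (a + b - x) hx0 hy0
    have hxy : (x + (a + b - x)) / 2 = (a + b) / 2 := by ring
    rw [hxy] at h
    exact h
  have h2 : (∫ x in a..b, (x ^ p + (a + b - x) ^ p) / 2)
      = ∫ x in a..b, x ^ p := by
    rw [intervalIntegral.integral_div, intervalIntegral.integral_add hint1 hint2,
      integral_refl_eq]
    ring
  have h3 : (∫ _x in a..b, ((a + b) / 2) ^ p) = (b - a) * ((a + b) / 2) ^ p := by
    simp [intervalIntegral.integral_const, smul_eq_mul]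
  linarith [key, h2 ▸ key]

private lemma lin_integral {a b c d : ℝ} (hab : a < b) :
    (∫ x in a..b, ((b - x) * c + (x - a) * d) / (b - a)) = (b - a) * (c + d) / 2 := by
  have hba : b - a ≠ 0 := by linarith
  have hfun : (fun x : ℝ => ((b - x) * c + (x - a) * d) / (b - a)) =
      fun x : ℝ => (b * c - a * d) / (b - a) + ((d - c) / (b - a)) * x := by
    funext x
    field_simp
    ring
  rw [hfun, intervalIntegral.integral_add intervalIntegrable_const
    (by apply Continuous.intervalIntegrable; fun_prop),
    intervalIntegral.integral_const, intervalIntegral.integral_const_mul, integral_id,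
    smul_eq_mul]
  field_simp
  ring

private lemma integrable_linpart {a b c d : ℝ} :
    IntervalIntegrable (fun x : ℝ => ((b - x) * c + (x - a) * d) / (b - a)) volume a b := by
  apply Continuous.intervalIntegrable
  continuity

private lemma integral_le_trap {a b p : ℝ} (ha : 0 < a) (hab : a < b)
    (hch : ∀ x ∈ Icc a b, x ^ p ≤ ((b - x) * a ^ p + (x - a) * b ^ p) / (b - a)) :
    (∫ x in a..b, x ^ p) ≤ (b - a) * (a ^ p + b ^ p) / 2 := by
  have h := intervalIntegral.integral_mono_on hab.le (integrable_rpow' ha hab.le)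
    integrable_linpart hch
  calc (∫ x in a..b, x ^ p) ≤ _ := h
    _ = (b - a) * (a ^ p + b ^ p) / 2 := lin_integral hab

private lemma trap_le_integral {a b p : ℝ} (ha : 0 < a) (hab : a < b)
    (hch : ∀ x ∈ Icc a b, ((b - x) * a ^ p + (x - a) * b ^ p) / (b - a) ≤ x ^ p) :
    (b - a) * (a ^ p + b ^ p) / 2 ≤ ∫ x in a..b, x ^ p := by
  have h := intervalIntegral.integral_mono_on hab.le integrable_linpart
    (integrable_rpow' ha hab.le) hch
  calc (b - a) * (a ^ p + b ^ p) / 2 = _ := (lin_integral hab).symm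
    _ ≤ ∫ x in a..b, x ^ p := h

private lemma N1 {w q : ℝ} (hw0 : 0 < w) (hw1 : w < 1) (hq : 0 < q) :
    1 - w ^ q ≤ (1 + q) * (1 - w) := by
  rcases le_or_gt q 1 with hq1 | hq1
  · have h : w ^ (1:ℝ) ≤ w ^ q := Real.rpow_le_rpow_of_exponent_ge hw0 hw1.le hq1
    rw [Real.rpow_one] at h
    nlinarith
  · have h := one_add_mul_self_le_rpow_one_add (s := w - 1) (by linarith) hq1.le
    have h2 : (1 + (w - 1) : ℝ) = w := by ring
    rw [h2] at h
    nlinarith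

private lemma N2 {u p : ℝ} (hu0 : 0 < u) (hu1 : u < 1) (hp0 : 0 < p) (hp1 : p < 1) :
    2 * ((1 + u) / 2) ^ p - u ^ p - 1 ≤ (1 - p) * (1 - u) / (1 + u) := by
  have h1u : (0:ℝ) < 1 + u := by linarith
  have hA : ((1 + u) / 2 : ℝ) ^ p ≤ p * ((1 + u) / 2) + (1 - p) :=
    gm_am (by linarith) hp0.le hp1.le
  have hup : (0:ℝ) < u ^ p := Real.rpow_pos_of_pos hu0 p
  have hden : (0:ℝ) < p + (1 - p) * u := by nlinarith
  have hinv2 : (u ^ p)⁻¹ ≤ p * u⁻¹ + (1 - p) := by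
    rw [← Real.inv_rpow hu0.le]
    exact gm_am (by positivity) hp0.le hp1.le
  have hlow : u ≤ u ^ p * (p + (1 - p) * u) := by
    have h3 : 1 ≤ u ^ p * (p * u⁻¹ + (1 - p)) := by
      calc (1:ℝ) = u ^ p * (u ^ p)⁻¹ := (mul_inv_cancel₀ hup.ne').symm
        _ ≤ u ^ p * (p * u⁻¹ + (1 - p)) := mul_le_mul_of_nonneg_left hinv2 hup.le
    have h4 : u * (u ^ p * (p * u⁻¹ + (1 - p))) = u ^ p * (p + (1 - p) * u) := by
      field_simp
    nlinarith
  have hU : u / (p + (1 - p) * u) ≤ u ^ p := by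
    rw [div_le_iff₀ hden]; linarith
  have hpoly : (p + (1 - p) * u) * (2 - p + p * u) ≤ 1 + u := by
    nlinarith [mul_nonneg (mul_nonneg (by linarith : (0:ℝ) ≤ 1 - p)
      (by linarith : (0:ℝ) ≤ 1 - u)) (by nlinarith : (0:ℝ) ≤ 1 - p + p * u)]
  have hU2 : u * (2 - p + p * u) / (1 + u) ≤ u / (p + (1 - p) * u) := by
    rw [div_le_div_iff₀ h1u hden]
    nlinarith [mul_le_mul_of_nonneg_left hpoly hu0.le]
  have hid : 1 - p + p * u - u * (2 - p + p * u) / (1 + u) = (1 - p) * (1 - u) / (1 + u) := by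
    field_simp; ring
  have hU3 : u * (2 - p + p * u) / (1 + u) ≤ u ^ p := le_trans hU2 hU
  linarith [hA, hU3, hid]

private lemma N3a {u p : ℝ} (hu0 : 0 < u) (hu1 : u < 1) (hp1 : 1 < p) (hp2 : p ≤ 2) :
    1 + u ^ p - 2 * ((1 + u) / 2) ^ p ≤ (p - 1) * (1 - u) / (1 + u) := by
  have h1u : (0:ℝ) < 1 + u := by linarith
  set A : ℝ := (1 + u) / 2 with hAdef
  have hA0 : (0:ℝ) < A := by positivity
  have hA1 : A < 1 := by rw [hAdef]; linarith
  have hsplit : u ^ p = u * u ^ (p - 1) := by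
    have h := Real.rpow_add hu0 1 (p - 1)
    rw [show (1:ℝ) + (p - 1) = p by ring, Real.rpow_one] at h
    exact h
  have hgm : u ^ (p - 1) ≤ (p - 1) * u + (1 - (p - 1)) :=
    gm_am hu0.le (by linarith) (by linarith)
  have hu_up : u ^ p ≤ u * ((p - 1) * u + (2 - p)) := by
    rw [hsplit]
    have : (1 - (p - 1) : ℝ) = 2 - p := by ring
    nlinarith [hgm]
  have hAsplit : A ^ p = A * A ^ (p - 1) := by
    have h := Real.rpow_add hA0 1 (p - 1)
    rw [show (1:ℝ) + (p - 1) = p by ring, Real.rpow_one] at h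
    exact h
  have hexp : A ^ (p - 1) = Real.exp (Real.log A * (p - 1)) := Real.rpow_def_of_pos hA0 _
  have hbern : 1 + (p - 1) * Real.log A ≤ A ^ (p - 1) := by
    rw [hexp]
    have := Real.add_one_le_exp (Real.log A * (p - 1))
    linarith [this]
  have hA_low : A * (1 + (p - 1) * Real.log A) ≤ A ^ p := by
    rw [hAsplit]
    exact mul_le_mul_of_nonneg_left hbern hA0.le
  have hlog0 : Real.log A ≤ 0 := Real.log_nonpos hA0.le hA1.le
  have hlog1 : -Real.log A ≤ (1 - u) / (1 + u) := by
    have h := Real.log_le_sub_one_of_pos (inv_pos.2 hA0)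
    rw [Real.log_inv] at h
    have hinv : A⁻¹ - 1 = (1 - u) / (1 + u) := by
      rw [hAdef]; field_simp; ring
    linarith
  set l := Real.log A with hl
  have hkey : 1 + u * ((p - 1) * u + (2 - p)) - 2 * (A * (1 + (p - 1) * l)) =
      (p - 1) * (u ^ 2 - u - (1 + u) * l) := by
    rw [hAdef]; ring
  have hmid : (p - 1) * (u ^ 2 - u - (1 + u) * l) ≤ (p - 1) * (1 - u) ^ 2 := by
    apply mul_le_mul_of_nonneg_left _ (by linarith)
    have : (1 + u) * (-l) ≤ 1 - u := by
      rw [← le_div_iff₀' h1u]; linarith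
    nlinarith
  have hfin : (p - 1) * (1 - u) ^ 2 ≤ (p - 1) * (1 - u) / (1 + u) := by
    rw [le_div_iff₀ h1u]
    nlinarith [mul_nonneg (mul_nonneg (by linarith : (0:ℝ) ≤ p - 1)
      (by linarith : (0:ℝ) ≤ 1 - u)) (sq_nonneg u)]
  nlinarith [hu_up, hA_low, hkey, hmid, hfin]

private lemma N3b {u p : ℝ} (hu0 : 0 < u) (hu1 : u < 1) (hp2 : 2 ≤ p) :
    1 + u ^ p - 2 * ((1 + u) / 2) ^ p ≤ (p - 1) * (1 - u) / (1 + u) := by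
  have h1u : (0:ℝ) < 1 + u := by linarith
  set A : ℝ := (1 + u) / 2 with hAdef
  have hA0 : (0:ℝ) < A := by positivity
  set v : ℝ := u ^ (p / 2) with hv
  have hv0 : 0 < v := Real.rpow_pos_of_pos hu0 _
  have hv1 : v ≤ 1 := Real.rpow_le_one hu0.le hu1.le (by linarith)
  have hvv : u ^ p = v * v := by
    have h := Real.rpow_add hu0 (p / 2) (p / 2)
    rw [show p / 2 + p / 2 = p by ring] at h
    rw [hv]; exact h
  have hAu : u ≤ A ^ (2:ℝ) := by
    rw [Real.rpow_two, hAdef]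
    nlinarith
  have hAv : v ≤ A ^ p := by
    have h1 : u ^ (p / 2) ≤ (A ^ (2:ℝ)) ^ (p / 2) :=
      Real.rpow_le_rpow hu0.le hAu (by linarith)
    have h2 : (A ^ (2:ℝ)) ^ (p / 2) = A ^ p := by
      rw [← Real.rpow_mul hA0.le, show (2:ℝ) * (p / 2) = p by ring]
    rw [hv, ← h2]
    exact h1
  have hbern : 1 + (p / 2) * (u - 1) ≤ v := by
    have h := one_add_mul_self_le_rpow_one_add (s := u - 1) (p := p / 2) (by linarith)
      (by linarith)
    have h2 : (1 + (u - 1) : ℝ) = u := by ring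
    rw [h2] at h
    exact h
  have hstep : 1 + u ^ p - 2 * A ^ p ≤ (1 - v) ^ 2 := by
    rw [hvv]; nlinarith [hAv]
  have hgoal : (1 - v) ^ 2 ≤ (p - 1) * (1 - u) / (1 + u) := by
    rw [le_div_iff₀ h1u]
    have hb : 1 - v ≤ p / 2 * (1 - u) := by linarith
    have hv1' : (0:ℝ) ≤ 1 - v := by linarith
    rcases le_or_gt (p * u) (p - 2) with hc | hc
    · nlinarith [hb, hv1', mul_nonneg hv1' hu0.le, sq_nonneg (1 - v)]
    · have hd : (0:ℝ) ≤ (2 - p * (1 - u)) * (2 * p - 2 - p * (1 - u)) :=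
        mul_nonneg (by linarith) (by nlinarith)
      have hsq : (1 - v) ^ 2 ≤ (p / 2) ^ 2 * (1 - u) ^ 2 := by nlinarith [hb, hv1']
      nlinarith [mul_le_mul_of_nonneg_right hsq h1u.le,
        mul_nonneg hd (by linarith : (0:ℝ) ≤ 1 - u)]
  linarith [hstep, hgoal]

/-- Inequality (6.2): bounds for the difference between powers of the arithmetic mean
and the `p`-logarithmic mean. -/
theorem arith_plog_mean_inequality (a b p : ℝ) (ha : 0 < a) (hab : a < b)
    (hp1 : p ≠ -1) (hp0 : p ≠ 0) :
    (p < 0 →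
      |((a + b) / 2) ^ p - (b ^ (p + 1) - a ^ (p + 1)) / ((p + 1) * (b - a))| ≤
        1 / 4 * ((1 - p) * a ^ p * (b - a) / ((a + b) / 2))) ∧
    (0 < p → p ≠ 1 →
      |((a + b) / 2) ^ p - (b ^ (p + 1) - a ^ (p + 1)) / ((p + 1) * (b - a))| ≤
        1 / 4 * (|1 - p| * b ^ p * (b - a) / ((a + b) / 2))) := by
  have hb0 : (0:ℝ) < b := lt_trans ha hab
  have hba : (0:ℝ) < b - a := by linarith
  have hA0 : (0:ℝ) < (a + b) / 2 := by linarith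
  have hAa : a < (a + b) / 2 := by linarith
  have hAb : (a + b) / 2 < b := by linarith
  have H0 : (0:ℝ) ∉ Set.uIcc a b := by
    rw [Set.uIcc_of_le hab.le]
    rintro ⟨h0, -⟩
    linarith
  have hI : (∫ x in a..b, x ^ p) = (b ^ (p + 1) - a ^ (p + 1)) / (p + 1) :=
    integral_rpow (Or.inr ⟨hp1, H0⟩)
  have hL : (b ^ (p + 1) - a ^ (p + 1)) / ((p + 1) * (b - a)) =
      (∫ x in a..b, x ^ p) / (b - a) := by
    rw [hI, div_div]
  -- pointwise chord inequality helpers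
  have hchord : ∀ {q : ℝ}, (q < 0 ∨ 1 ≤ q) → ∀ x ∈ Icc a b,
      x ^ q ≤ ((b - x) * a ^ q + (x - a) * b ^ q) / (b - a) := by
    intro q hq x hx
    have hw₁ : (0:ℝ) ≤ (b - x) / (b - a) := by
      apply div_nonneg _ hba.le; linarith [hx.2]
    have hw₂ : (0:ℝ) ≤ (x - a) / (b - a) := by
      apply div_nonneg _ hba.le; linarith [hx.1]
    have hw : (b - x) / (b - a) + (x - a) / (b - a) = 1 := by
      field_simp
      ring
    have hx' : x = (b - x) / (b - a) * a + (x - a) / (b - a) * b := by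
      field_simp; ring
    have h := chord_cvx hq ha hb0 hw₁ hw₂ hw
    rw [← hx'] at h
    calc x ^ q ≤ (b - x) / (b - a) * a ^ q + (x - a) / (b - a) * b ^ q := h
      _ = ((b - x) * a ^ q + (x - a) * b ^ q) / (b - a) := by ring
  have hchord' : ∀ {q : ℝ}, 0 ≤ q → q ≤ 1 → ∀ x ∈ Icc a b,
      ((b - x) * a ^ q + (x - a) * b ^ q) / (b - a) ≤ x ^ q := by
    intro q hq0 hq1 x hx
    have hw₁ : (0:ℝ) ≤ (b - x) / (b - a) := by
      apply div_nonneg _ hba.le; linarith [hx.2]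
    have hw₂ : (0:ℝ) ≤ (x - a) / (b - a) := by
      apply div_nonneg _ hba.le; linarith [hx.1]
    have hw : (b - x) / (b - a) + (x - a) / (b - a) = 1 := by
      field_simp
      ring
    have hx' : x = (b - x) / (b - a) * a + (x - a) / (b - a) * b := by
      field_simp; ring
    have h := chord_ccv hq0 hq1 ha.le hb0.le hw₁ hw₂ hw
    rw [← hx'] at h
    calc ((b - x) * a ^ q + (x - a) * b ^ q) / (b - a)
        = (b - x) / (b - a) * a ^ q + (x - a) / (b - a) * b ^ q := by ring
      _ ≤ x ^ q := h
  have hmidcvx : ∀ {q : ℝ}, (q < 0 ∨ 1 ≤ q) → ∀ x y : ℝ, 0 < x → 0 < y →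
      ((x + y) / 2) ^ q ≤ (x ^ q + y ^ q) / 2 := by
    intro q hq x y hx hy
    have h := chord_cvx hq hx hy (by norm_num : (0:ℝ) ≤ 1 / 2)
      (by norm_num : (0:ℝ) ≤ 1 / 2) (by norm_num)
    have e1 : (1 / 2 : ℝ) * x + 1 / 2 * y = (x + y) / 2 := by ring
    have e2 : (1 / 2 : ℝ) * x ^ q + 1 / 2 * y ^ q = (x ^ q + y ^ q) / 2 := by ring
    rw [e1, e2] at h
    exact h
  have hmidccv : ∀ {q : ℝ}, 0 ≤ q → q ≤ 1 → ∀ x y : ℝ, 0 < x → 0 < y →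
      (x ^ q + y ^ q) / 2 ≤ ((x + y) / 2) ^ q := by
    intro q hq0 hq1 x y hx hy
    have h := chord_ccv hq0 hq1 hx.le hy.le (by norm_num : (0:ℝ) ≤ 1 / 2)
      (by norm_num : (0:ℝ) ≤ 1 / 2) (by norm_num)
    have e1 : (1 / 2 : ℝ) * x + 1 / 2 * y = (x + y) / 2 := by ring
    have e2 : (1 / 2 : ℝ) * x ^ q + 1 / 2 * y ^ q = (x ^ q + y ^ q) / 2 := by ring
    rw [e1, e2] at h
    exact h
  constructor
  · -- case p < 0
    intro hp
    have hcvx : p < 0 ∨ 1 ≤ p := Or.inl hp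
    have h1 : (b - a) * ((a + b) / 2) ^ p ≤ ∫ x in a..b, x ^ p :=
      mid_le_integral ha hab (fun x y hx hy => hmidcvx hcvx x y hx hy)
    have h2 : (∫ x in a..b, x ^ p) ≤ (b - a) * (a ^ p + b ^ p) / 2 :=
      integral_le_trap ha hab (fun x hx => hchord hcvx x hx)
    have hlow : ((a + b) / 2) ^ p ≤ (∫ x in a..b, x ^ p) / (b - a) := by
      rw [le_div_iff₀ hba]; linarith
    have hhigh : (∫ x in a..b, x ^ p) / (b - a) ≤ (a ^ p + b ^ p) / 2 := by
      rw [div_le_iff₀ hba]; linarith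
    -- algebraic bound
    have halg : (a ^ p + b ^ p) / 2 - ((a + b) / 2) ^ p ≤
        1 / 4 * ((1 - p) * a ^ p * (b - a) / ((a + b) / 2)) := by
      set A : ℝ := (a + b) / 2 with hAdef
      clear_value A
      have hap : (0:ℝ) < a ^ p := Real.rpow_pos_of_pos ha p
      have hw0 : 0 < a / A := by positivity
      have hw1 : a / A < 1 := (div_lt_one hA0).2 hAa
      have hq : (0:ℝ) < -p := by linarith
      have hN := N1 hw0 hw1 hq
      have hwq : (a / A) ^ (-p) = A ^ p / a ^ p := by
        rw [Real.rpow_neg (by positivity), Real.div_rpow ha.le hA0.le]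
        rw [inv_div]
      rw [hwq] at hN
      -- multiply by a ^ p
      have hN2 : a ^ p - A ^ p ≤ (1 - p) * a ^ p * (1 - a / A) := by
        have h := mul_le_mul_of_nonneg_left hN hap.le
        have e : a ^ p * (1 - A ^ p / a ^ p) = a ^ p - A ^ p := by
          field_simp
        rw [e] at h
        calc a ^ p - A ^ p ≤ a ^ p * ((1 + -p) * (1 - a / A)) := h
          _ = (1 - p) * a ^ p * (1 - a / A) := by ring
      have e2 : 1 - a / A = (b - a) / (2 * A) := by
        rw [hAdef]; field_simp; ring
      rw [e2] at hN2
      have hbp : b ^ p ≤ A ^ p :=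
        Real.rpow_le_rpow_of_nonpos hA0 hAb.le hp.le
      have e3 : 1 / 4 * ((1 - p) * a ^ p * (b - a) / A) =
          ((1 - p) * a ^ p * ((b - a) / (2 * A))) / 2 := by
        ring
      rw [e3]
      linarith
    have habs : |((a + b) / 2) ^ p - (∫ x in a..b, x ^ p) / (b - a)| ≤
        (a ^ p + b ^ p) / 2 - ((a + b) / 2) ^ p := by
      rw [abs_of_nonpos (by linarith)]
      linarith
    rw [hL]
    linarith [habs, halg]
  · -- case 0 < p
    intro hp hpne1
    set A : ℝ := (a + b) / 2 with hAdef
    clear_value A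
    have hbp : (0:ℝ) < b ^ p := Real.rpow_pos_of_pos hb0 p
    have hu0 : 0 < a / b := by positivity
    have hu1 : a / b < 1 := (div_lt_one hb0).2 hab
    have e1 : ((1 + a / b) / 2 : ℝ) = A / b := by
      rw [hAdef]; field_simp; ring
    have e2 : ((1 + a / b) / 2 : ℝ) ^ p = A ^ p / b ^ p := by
      rw [e1, Real.div_rpow hA0.le hb0.le]
    have e3 : (a / b : ℝ) ^ p = a ^ p / b ^ p := Real.div_rpow ha.le hb0.le p
    have e4 : ((1 - a / b) / (1 + a / b) : ℝ) = (b - a) / (2 * A) := by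
      have h' : ((1 - a / b) / (1 + a / b) : ℝ) = (b - a) / (a + b) := by
        have n1 : ((1 - a / b) : ℝ) = (b - a) / b := by field_simp
        have n2 : ((1 + a / b) : ℝ) = (a + b) / b := by field_simp; ring
        rw [n1, n2, div_div_div_cancel_right₀]
        exact hb0.ne'
      rw [h', hAdef, show (2:ℝ) * ((a + b) / 2) = a + b by ring]
    rcases lt_or_gt_of_ne hpne1 with hplt | hpgt
    · -- 0 < p < 1 : concave
      have h1 : (∫ x in a..b, x ^ p) ≤ (b - a) * ((a + b) / 2) ^ p :=
        integral_le_mid ha hab (fun x y hx hy => hmidccv hp.le hplt.le x y hx hy)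
      have h2 : (b - a) * (a ^ p + b ^ p) / 2 ≤ ∫ x in a..b, x ^ p :=
        trap_le_integral ha hab (fun x hx => hchord' hp.le hplt.le x hx)
      have hlow : (a ^ p + b ^ p) / 2 ≤ (∫ x in a..b, x ^ p) / (b - a) := by
        rw [le_div_iff₀ hba]; linarith
      have hhigh : (∫ x in a..b, x ^ p) / (b - a) ≤ ((a + b) / 2) ^ p := by
        rw [div_le_iff₀ hba]; linarith
      rw [← hAdef] at hhigh
      have hN := N2 hu0 hu1 hp hplt
      have e4'' : (1 - p) * (1 - a / b) / (1 + a / b) =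
          (1 - p) * ((1 - a / b) / (1 + a / b)) := by ring
      rw [e2, e3, e4'', e4] at hN
      -- multiply hN by b ^ p / 2
      have halg : A ^ p - (a ^ p + b ^ p) / 2 ≤
          1 / 4 * ((1 - p) * b ^ p * (b - a) / A) := by
        have h := mul_le_mul_of_nonneg_left hN (by positivity : (0:ℝ) ≤ b ^ p / 2)
        have eL : b ^ p / 2 * (2 * (A ^ p / b ^ p) - a ^ p / b ^ p - 1) =
            A ^ p - (a ^ p + b ^ p) / 2 := by
          field_simp
          ring
        have eR : b ^ p / 2 * ((1 - p) * ((b - a) / (2 * A))) =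
            1 / 4 * ((1 - p) * b ^ p * (b - a) / A) := by
          ring
        rw [eL, eR] at h
        exact h
      have habs : |A ^ p - (∫ x in a..b, x ^ p) / (b - a)| ≤
          A ^ p - (a ^ p + b ^ p) / 2 := by
        rw [abs_of_nonneg (by linarith)]
        linarith
      have habs1p : |1 - p| = 1 - p := abs_of_nonneg (by linarith)
      rw [hL, habs1p]
      linarith [habs, halg]
    · -- 1 < p : convex
      have hcvx : p < 0 ∨ 1 ≤ p := Or.inr hpgt.le
      have h1 : (b - a) * ((a + b) / 2) ^ p ≤ ∫ x in a..b, x ^ p :=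
        mid_le_integral ha hab (fun x y hx hy => hmidcvx hcvx x y hx hy)
      have h2 : (∫ x in a..b, x ^ p) ≤ (b - a) * (a ^ p + b ^ p) / 2 :=
        integral_le_trap ha hab (fun x hx => hchord hcvx x hx)
      have hlow : ((a + b) / 2) ^ p ≤ (∫ x in a..b, x ^ p) / (b - a) := by
        rw [le_div_iff₀ hba]; linarith
      rw [← hAdef] at hlow
      have hhigh : (∫ x in a..b, x ^ p) / (b - a) ≤ (a ^ p + b ^ p) / 2 := by
        rw [div_le_iff₀ hba]; linarith
      have hN : 1 + (a / b) ^ p - 2 * ((1 + a / b) / 2) ^ p ≤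
          (p - 1) * (1 - a / b) / (1 + a / b) := by
        rcases le_or_gt p 2 with hp2 | hp2
        · exact N3a hu0 hu1 hpgt hp2
        · exact N3b hu0 hu1 hp2.le
      have e4' : ((p - 1) * (1 - a / b) / (1 + a / b) : ℝ) =
          (p - 1) * ((1 - a / b) / (1 + a / b)) := by ring
      rw [e2, e3, e4', e4] at hN
      have halg : (a ^ p + b ^ p) / 2 - A ^ p ≤
          1 / 4 * ((p - 1) * b ^ p * (b - a) / A) := by
        have h := mul_le_mul_of_nonneg_left hN (by positivity : (0:ℝ) ≤ b ^ p / 2)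
        have eL : b ^ p / 2 * (1 + a ^ p / b ^ p - 2 * (A ^ p / b ^ p)) =
            (a ^ p + b ^ p) / 2 - A ^ p := by
          field_simp
          ring
        have eR : b ^ p / 2 * ((p - 1) * ((b - a) / (2 * A))) =
            1 / 4 * ((p - 1) * b ^ p * (b - a) / A) := by
          ring
        rw [eL, eR] at h
        exact h
      have habs : |A ^ p - (∫ x in a..b, x ^ p) / (b - a)| ≤
          (a ^ p + b ^ p) / 2 - A ^ p := by
        rw [abs_of_nonpos (by linarith)]
        linarith
      have habs1p : |1 - p| = p - 1 := by
        rw [abs_of_nonpos (by linarith)]; ring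
      rw [hL, habs1p]
      linarith [habs, halg]
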